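/- Let H be a Hilbert space, (eᵢ)_{i∈ℕ} an orthonormal sequence, and (Γᵢ), (γᵢ) ∈ ℓ²(ℂ) with ∑ Re(Γᵢ·conj(γᵢ)) > 0. If x ∈ H satisfies ‖x − ∑((Γᵢ+γᵢ)/2)eᵢ‖ ≤ (1/2)(∑|Γᵢ − γᵢ|²)^{1/2}, then 0 ≤ ‖x‖² − ∑|⟨x,eᵢ⟩|² ≤ (1/4)·(∑|Γᵢ − γᵢ|² / ∑ Re(Γᵢ·conj(γᵢ)))·∑|⟨x,eᵢ⟩|². -/

import Mathlib

open scoped InnerProductSpace ComplexConjugate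

set_option maxHeartbeats 1000000 in
theorem stmt_18 {E : Type*} [NormedAddCommGroup E] [InnerProductSpace ℂ E]
    [CompleteSpace E] (e : ℕ → E) (he : Orthonormal ℂ e) (Γ γ : ℕ → ℂ)
    (hΓ : Summable fun i => ‖Γ i‖ ^ 2) (hγ : Summable fun i => ‖γ i‖ ^ 2)
    (hpos : 0 < ∑' i, (Γ i * conj (γ i)).re)
    (s : E) (hs : HasSum (fun i => ((Γ i + γ i) / 2) • e i) s)
    (x : E) (hx : ‖x - s‖ ≤ (1 / 2) * Real.sqrt (∑' i, ‖Γ i - γ i‖ ^ 2)) :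
    0 ≤ ‖x‖ ^ 2 - ∑' i, ‖⟪x, e i⟫_ℂ‖ ^ 2 ∧
      ‖x‖ ^ 2 - ∑' i, ‖⟪x, e i⟫_ℂ‖ ^ 2 ≤
        (1 / 4) * ((∑' i, ‖Γ i - γ i‖ ^ 2) / ∑' i, (Γ i * conj (γ i)).re) *
          ∑' i, ‖⟪x, e i⟫_ℂ‖ ^ 2 := by
  set c : ℕ → ℂ := fun i => (Γ i + γ i) / 2 with hc_def
  set a : ℕ → ℂ := fun i => ⟪x, e i⟫_ℂ with ha_def
  set D : ℝ := ∑' i, ‖Γ i - γ i‖ ^ 2 with hD_def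
  set S : ℝ := ∑' i, (Γ i * conj (γ i)).re with hS_def
  set B : ℝ := ∑' i, ‖a i‖ ^ 2 with hB_def
  -- Bessel
  have haB : Summable fun i => ‖a i‖ ^ 2 := by
    simpa [ha_def, norm_inner_symm] using he.inner_products_summable (x := x)
  have hBessel : B ≤ ‖x‖ ^ 2 := by
    have := he.tsum_inner_products_le (x := x)
    simpa [hB_def, ha_def, norm_inner_symm x] using this
  have hB0 : 0 ≤ B := tsum_nonneg fun i => sq_nonneg _
  refine ⟨by linarith, ?_⟩
  -- summability of D and S
  have hD_sum : Summable fun i => ‖Γ i - γ i‖ ^ 2 := by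
    refine Summable.of_nonneg_of_le (fun i => sq_nonneg _) (fun i => ?_)
      (((hΓ.add hγ).mul_left 2))
    have h1 : ‖Γ i - γ i‖ ≤ ‖Γ i‖ + ‖γ i‖ := norm_sub_le _ _
    have h2 : ‖Γ i - γ i‖ ^ 2 ≤ (‖Γ i‖ + ‖γ i‖) ^ 2 := pow_le_pow_left₀ (norm_nonneg _) h1 2
    nlinarith [sq_nonneg (‖Γ i‖ - ‖γ i‖)]
  have hS_abs : Summable fun i => |(Γ i * conj (γ i)).re| := by
    refine Summable.of_nonneg_of_le (fun i => abs_nonneg _) (fun i => ?_)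
      (((hΓ.add hγ).mul_left (1/2)))
    have h1 : |(Γ i * conj (γ i)).re| ≤ ‖Γ i * conj (γ i)‖ := Complex.abs_re_le_norm _
    have h2 : ‖Γ i * conj (γ i)‖ = ‖Γ i‖ * ‖γ i‖ := by
      rw [norm_mul, RCLike.norm_conj]
    nlinarith [norm_nonneg (Γ i), norm_nonneg (γ i), sq_nonneg (‖Γ i‖ - ‖γ i‖)]
  have hS_sum : Summable fun i => (Γ i * conj (γ i)).re := hS_abs.of_abs
  have hD0 : 0 ≤ D := tsum_nonneg fun i => sq_nonneg _
  -- inner products of s with e j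
  have hsej : ∀ j, ⟪e j, s⟫_ℂ = c j := by
    intro j
    have h1 : HasSum (fun i => ⟪e j, c i • e i⟫_ℂ) ⟪e j, s⟫_ℂ :=
      (innerSL ℂ (e j)).hasSum hs
    have h2 : HasSum (fun i => ⟪e j, c i • e i⟫_ℂ) (c j) := by
      have : (fun i => ⟪e j, c i • e i⟫_ℂ) = fun i => if i = j then c j else 0 := by
        funext i
        rw [inner_smul_right, orthonormal_iff_ite.mp he j i]
        rcases eq_or_ne i j with rfl | h
        · simp
        · simp [h, Ne.symm h]
      rw [this]
      exact hasSum_ite_eq j (c j)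
    exact h1.unique h2
  -- ⟪x, s⟫ = ∑ c i * a i
  have hxs : HasSum (fun i => (c i * a i).re) (⟪x, s⟫_ℂ).re := by
    have h1 : HasSum (fun i => ⟪x, c i • e i⟫_ℂ) ⟪x, s⟫_ℂ := (innerSL ℂ x).hasSum hs
    have h2 : (fun i => ⟪x, c i • e i⟫_ℂ) = fun i => c i * a i := by
      funext i; rw [inner_smul_right]
    rw [h2] at h1
    have := Complex.reCLM.hasSum h1
    simpa using this
  -- ‖s‖² = ∑ ‖c i‖²
  have hnss : HasSum (fun i => ‖c i‖ ^ 2) (‖s‖ ^ 2) := by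
    have h1 : HasSum (fun i => ⟪s, c i • e i⟫_ℂ) ⟪s, s⟫_ℂ := (innerSL ℂ s).hasSum hs
    have h2 : (fun i => ⟪s, c i • e i⟫_ℂ) = fun i => c i * conj (c i) := by
      funext i
      rw [inner_smul_right, ← inner_conj_symm, hsej i]
    rw [h2] at h1
    have h3 : HasSum (fun i => ‖c i‖ ^ 2) ((⟪s, s⟫_ℂ).re) := by
      have := Complex.reCLM.hasSum h1
      simpa [Complex.mul_conj, Complex.normSq_eq_norm_sq, ← Complex.ofReal_pow] using this
    have h5 : (⟪s, s⟫_ℂ).re = ‖s‖ ^ 2 := by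
      have := inner_self_eq_norm_sq (𝕜 := ℂ) s
      simpa using this
    rwa [h5] at h3
  -- key identity: ‖s‖² = S + D/4
  have hP : ‖s‖ ^ 2 = S + D / 4 := by
    have h1 : HasSum (fun i => (Γ i * conj (γ i)).re + ‖Γ i - γ i‖ ^ 2 / 4) (S + D / 4) := by
      exact hS_sum.hasSum.add ((hD_sum.hasSum).div_const 4)
    have h2 : (fun i => (Γ i * conj (γ i)).re + ‖Γ i - γ i‖ ^ 2 / 4) = fun i => ‖c i‖ ^ 2 := by
      funext i
      simp only [hc_def, Complex.sq_norm, Complex.normSq_apply,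
        Complex.mul_re, Complex.conj_re, Complex.conj_im, Complex.sub_re, Complex.sub_im,
        Complex.div_re, Complex.div_im, Complex.add_re, Complex.add_im, Complex.normSq_ofNat,
        Complex.ofReal_re]
      norm_num
      ring
    rw [h2] at h1
    exact hnss.unique h1
  -- the hypothesis squared
  have hxs2 : ‖x - s‖ ^ 2 ≤ D / 4 := by
    have h0 : 0 ≤ (1/2 : ℝ) * Real.sqrt D := by positivity
    have := mul_self_le_mul_self (norm_nonneg _) hx
    calc ‖x - s‖ ^ 2 = ‖x - s‖ * ‖x - s‖ := sq ..
      _ ≤ (1/2 * Real.sqrt D) * (1/2 * Real.sqrt D) := this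
      _ = (Real.sqrt D * Real.sqrt D) / 4 := by ring
      _ = D / 4 := by rw [Real.mul_self_sqrt hD0]
  have hexp : ‖x - s‖ ^ 2 = ‖x‖ ^ 2 - 2 * (⟪x, s⟫_ℂ).re + ‖s‖ ^ 2 := by
    have := norm_sub_sq (𝕜 := ℂ) x s
    simpa [RCLike.re_to_complex] using this
  have hkey : ‖x‖ ^ 2 ≤ 2 * (⟪x, s⟫_ℂ).re - S := by
    rw [hexp, hP] at hxs2; linarith
  -- Cauchy-Schwarz : re⟪x,s⟫ ≤ √(S + D/4) * √B
  have hmul_sum : Summable fun i => ‖c i‖ * ‖a i‖ := by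
    refine Summable.of_nonneg_of_le (fun i => by positivity) (fun i => ?_)
      ((hnss.summable.add haB).mul_left (1/2))
    nlinarith [sq_nonneg (‖c i‖ - ‖a i‖), norm_nonneg (c i), norm_nonneg (a i)]
  have hCS : (⟪x, s⟫_ℂ).re ≤ Real.sqrt (S + D / 4) * Real.sqrt B := by
    have h1 : (⟪x, s⟫_ℂ).re ≤ ∑' i, ‖c i‖ * ‖a i‖ := by
      rw [← hxs.tsum_eq]
      refine Summable.tsum_le_tsum (fun i => ?_) hxs.summable hmul_sum
      calc (c i * a i).re ≤ ‖c i * a i‖ := Complex.re_le_norm _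
        _ = ‖c i‖ * ‖a i‖ := by rw [norm_mul]
    have h2 : ∑' i, ‖c i‖ * ‖a i‖ ≤ Real.sqrt (S + D / 4) * Real.sqrt B := by
      refine Summable.tsum_le_of_sum_le hmul_sum (fun t => ?_)
      have hcs := Finset.sum_mul_sq_le_sq_mul_sq t (fun i => ‖c i‖) (fun i => ‖a i‖)
      have hle1 : ∑ i ∈ t, ‖c i‖ ^ 2 ≤ S + D / 4 := by
        rw [← hP]
        exact Summable.sum_le_tsum t (fun i _ => sq_nonneg _) hnss.summable |>.trans_eq hnss.tsum_eq
      have hle2 : ∑ i ∈ t, ‖a i‖ ^ 2 ≤ B := Summable.sum_le_tsum t (fun i _ => sq_nonneg _) haB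
      have hnn : (0:ℝ) ≤ ∑ i ∈ t, ‖c i‖ * ‖a i‖ :=
        Finset.sum_nonneg fun i _ => by positivity
      have hsq : (∑ i ∈ t, ‖c i‖ * ‖a i‖) ^ 2 ≤ (S + D / 4) * B := by
        refine hcs.trans ?_
        exact mul_le_mul hle1 hle2 (Finset.sum_nonneg fun i _ => sq_nonneg _)
          (by linarith [tsum_nonneg (L := SummationFilter.unconditional ℕ) (fun i => sq_nonneg (‖a i‖)), hB0])
      calc ∑ i ∈ t, ‖c i‖ * ‖a i‖ = Real.sqrt ((∑ i ∈ t, ‖c i‖ * ‖a i‖) ^ 2) :=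
            (Real.sqrt_sq hnn).symm
        _ ≤ Real.sqrt ((S + D / 4) * B) := Real.sqrt_le_sqrt hsq
        _ = Real.sqrt (S + D / 4) * Real.sqrt B := Real.sqrt_mul (by nlinarith [sq_nonneg ‖s‖, hP]) _
    linarith
  -- final algebra
  have hP0 : (0:ℝ) ≤ S + D / 4 := by nlinarith [sq_nonneg ‖s‖, hP]
  set p := Real.sqrt (S + D / 4) with hp_def
  set b := Real.sqrt B with hb_def
  have hp2 : p ^ 2 = S + D / 4 := Real.sq_sqrt hP0
  have hb2 : b ^ 2 = B := Real.sq_sqrt hB0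
  have hp0 : 0 ≤ p := Real.sqrt_nonneg _
  have hb0 : 0 ≤ b := Real.sqrt_nonneg _
  have hfin : ‖x‖ ^ 2 ≤ 2 * p * b - S := by linarith
  have hpb : (p * b) ^ 2 = (S + D / 4) * B := by rw [mul_pow, hp2, hb2]
  have hrw : 1 / 4 * (D / S) * B = 1 / 4 * D * B / S := by ring
  rw [hrw, le_div_iff₀ hpos]
  nlinarith [mul_le_mul_of_nonneg_right hfin hpos.le, sq_nonneg (p * b - S), hpb, hb2, hB0]
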